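/- Let g(x,·) be μ-strongly convex and L_g-smooth with minimizer y*(x), and consider the updates ŷ_{t+1} = ȳ_t - (λ/b_t) v̄_t and ȳ_{t+1} = ȳ_t + η_t(ŷ_{t+1} - ȳ_t), where b_t ≥ ρ > 0, 0 < η_t ≤ 1, 0 < λ ≤ ρ/(6L_g), and y* is κ-Lipschitz. Then, with x̄_{t+1} = x̄_t + η_t(x̂_{t+1} - x̄_t): ||ȳ_{t+1} - y*(x̄_{t+1})||² ≤ (1 - η_t μλ/(4b_t))||ȳ_t - y*(x̄_t)||² - (3η_t/4)||ŷ_{t+1} - ȳ_t||² + (25η_t λ/(6μb_t))||∇_y g(x̄_t, ȳ_t) - v̄_t||² + (25κ²η_t b_t/(6μλ))||x̂_{t+1} - x̄_t||². -/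

import Mathlib

open InnerProductSpace
set_option linter.unusedSectionVars false
set_option maxHeartbeats 1000000

variable {E : Type*} [NormedAddCommGroup E] [InnerProductSpace ℝ E] [CompleteSpace E]

local notation "⟪" x ", " y "⟫" => @inner ℝ _ _ x y







lemma hasDerivAt_line (f : E → ℝ) (hf : Differentiable ℝ f) (a u : E) (t : ℝ) :
    HasDerivAt (fun s : ℝ => f (a + s • u)) ⟪gradient f (a + t • u), u⟫ t := by
  have hline : HasDerivAt (fun s : ℝ => a + s • u) u t := by
    simpa using ((hasDerivAt_id t).smul_const u).const_add a
  have hg : HasFDerivAt f (toDual ℝ E (gradient f (a + t • u))) (a + t • u) :=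
    hasGradientAt_iff_hasFDerivAt.mp (hf (a + t • u)).hasGradientAt
  have := hg.comp_hasDerivAt t hline
  exact this



lemma convexOn_line (f : E → ℝ) (hc : ConvexOn ℝ Set.univ f) (a u : E) :
    ConvexOn ℝ Set.univ (fun t : ℝ => f (a + t • u)) := by
  refine ⟨convex_univ, fun x _ y _ c1 c2 hc1 hc2 hsum => ?_⟩
  have key : a + (c1 • x + c2 • y) • u = c1 • (a + x • u) + c2 • (a + y • u) := by
    have : (c1 : ℝ) • a + c2 • a = a := by rw [← add_smul, hsum, one_smul]
    rw [smul_add, smul_add, smul_smul, smul_smul, smul_eq_mul, smul_eq_mul]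
    rw [show c1 • a + (c1 * x) • u + (c2 • a + (c2 * y) • u)
        = (c1 • a + c2 • a) + ((c1 * x) • u + (c2 * y) • u) by module]
    rw [this, add_smul]
  simp only []
  rw [key]
  exact hc.2 (Set.mem_univ _) (Set.mem_univ _) hc1 hc2 hsum

lemma oneD_convex_grad (φ : ℝ → ℝ) (hc : ConvexOn ℝ Set.univ φ) {m : ℝ}
    (hd : HasDerivAt φ m 0) : φ 0 + m ≤ φ 1 := by
  have h := hc.le_slope_of_hasDerivAt (Set.mem_univ (0:ℝ)) (Set.mem_univ (1:ℝ))
    one_pos hd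
  rw [slope_def_field] at h
  simp at h
  linarith [h]

/-- First-order condition for differentiable convex functions. -/
lemma convex_grad_le (f : E → ℝ) (hf : Differentiable ℝ f)
    (hc : ConvexOn ℝ Set.univ f) (a b : E) :
    f a + ⟪gradient f a, b - a⟫ ≤ f b := by
  have hd := hasDerivAt_line f hf a (b - a) 0
  rw [show a + (0:ℝ) • (b - a) = a by simp] at hd
  have h := oneD_convex_grad _ (convexOn_line f hc a (b - a)) hd
  simpa using h

/-- First-order condition for strongly convex functions. -/
lemma strong_convex_grad_le (f : E → ℝ) (μ : ℝ) (hf : Differentiable ℝ f)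
    (hc : StrongConvexOn Set.univ μ f) (a b : E) :
    f a + ⟪gradient f a, b - a⟫ + μ / 2 * ‖b - a‖ ^ 2 ≤ f b := by
  set u := b - a with hu
  have hcvx : ConvexOn ℝ Set.univ (fun y => f y - μ / 2 * ‖y‖ ^ 2) :=
    strongConvexOn_iff_convex.mp hc
  -- derivative of ψ t = f (a + t u) - μ/2 ‖a + t u‖²  at 0
  have hq : (fun t : ℝ => μ / 2 * ‖a + t • u‖ ^ 2)
      = fun t : ℝ => μ / 2 * (‖a‖^2 + 2 * t * ⟪a, u⟫ + t^2 * ‖u‖^2) := by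
    funext t
    congr 1
    rw [norm_add_sq_real, norm_smul, real_inner_smul_right]
    simp only [Real.norm_eq_abs, mul_pow, sq_abs]
    ring
  have hqd : HasDerivAt (fun t : ℝ => μ / 2 * ‖a + t • u‖ ^ 2) (μ / 2 * (2 * ⟪a, u⟫)) 0 := by
    rw [hq]
    have : HasDerivAt (fun t : ℝ => ‖a‖^2 + 2 * t * ⟪a, u⟫ + t^2 * ‖u‖^2)
        (2 * ⟪a, u⟫ + 0) 0 := by
      have h1 : HasDerivAt (fun t : ℝ => ‖a‖^2 + 2 * t * ⟪a, u⟫) (2 * ⟪a, u⟫) 0 := by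
        simpa using (((hasDerivAt_id (0:ℝ)).const_mul 2).mul_const ⟪a, u⟫).const_add (‖a‖^2)
      have h2 : HasDerivAt (fun t : ℝ => t^2 * ‖u‖^2) 0 0 := by
        have := ((hasDerivAt_pow 2 (0:ℝ))).mul_const (‖u‖^2)
        simpa using this
      exact h1.add h2
    simpa using this.const_mul (μ / 2)
  have hd := (hasDerivAt_line f hf a u 0).sub hqd
  rw [show a + (0:ℝ) • u = a by simp] at hd
  have h := oneD_convex_grad _ (convexOn_line _ hcvx a u) hd
  simp only [zero_smul, add_zero, one_smul] at h
  have hab : a + u = b := by rw [hu]; abel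
  rw [hab] at h
  have hexp : ‖b - a‖ ^ 2 = ‖b‖^2 - 2 * ⟪a, b⟫ + ‖a‖^2 := by
    rw [norm_sub_sq_real, real_inner_comm]; try ring
  have hin : ⟪a, u⟫ = ⟪a, b⟫ - ‖a‖^2 := by
    rw [hu, inner_sub_right, real_inner_self_eq_norm_sq]
  rw [hin] at h
  rw [hexp]
  linarith

/-- Descent lemma for L-smooth differentiable functions. -/
lemma smooth_descent (f : E → ℝ) (L : ℝ) (hf : Differentiable ℝ f)
    (hs : ∀ y1 y2, ‖gradient f y1 - gradient f y2‖ ≤ L * ‖y1 - y2‖) (a b : E) :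
    f b ≤ f a + ⟪gradient f a, b - a⟫ + L / 2 * ‖b - a‖ ^ 2 := by
  set u := b - a with hu
  set m := (⟪gradient f a, u⟫ : ℝ) with hm
  set F : ℝ → ℝ := fun t => f a + t * m + L / 2 * t^2 * ‖u‖^2 - f (a + t • u) with hF
  have hFd : ∀ t : ℝ, HasDerivAt F (m + L * t * ‖u‖^2 - ⟪gradient f (a + t • u), u⟫) t := by
    intro t
    have h1 : HasDerivAt (fun t : ℝ => f a + t * m + L / 2 * t^2 * ‖u‖^2)
        (m + L * t * ‖u‖^2) t := by
      have ha : HasDerivAt (fun t : ℝ => f a + t * m) m t := by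
        simpa using ((hasDerivAt_id t).mul_const m).const_add (f a)
      have hb : HasDerivAt (fun t : ℝ => L / 2 * t^2 * ‖u‖^2) (L * t * ‖u‖^2) t := by
        have h2 := ((hasDerivAt_pow 2 t).const_mul (L/2)).mul_const (‖u‖^2)
        refine h2.congr_deriv ?_
        rw [show (2:ℕ) - 1 = 1 from rfl, pow_one]
        push_cast
        ring
      exact ha.add hb
    exact h1.sub (hasDerivAt_line f hf a u t)
  have hderiv_nonneg : ∀ t ∈ Set.Ioo (0:ℝ) 1, 0 ≤ deriv F t := by
    intro t ht
    rw [(hFd t).deriv]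
    have hip : ⟪gradient f (a + t • u) - gradient f a, u⟫ ≤ L * t * ‖u‖^2 := by
      calc ⟪gradient f (a + t • u) - gradient f a, u⟫
          ≤ ‖gradient f (a + t • u) - gradient f a‖ * ‖u‖ := real_inner_le_norm _ _
        _ ≤ (L * ‖(a + t • u) - a‖) * ‖u‖ := by
            apply mul_le_mul_of_nonneg_right (hs _ _) (norm_nonneg _)
        _ = L * t * ‖u‖^2 := by
            rw [add_sub_cancel_left, norm_smul, Real.norm_eq_abs,
              abs_of_pos ht.1]; ring
    have : (⟪gradient f (a + t • u), u⟫ : ℝ) = ⟪gradient f (a + t • u) - gradient f a, u⟫ + m := by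
      rw [inner_sub_left]; ring
    rw [this]
    linarith
  have hFc : Continuous F := by
    have : Differentiable ℝ F := fun t => (hFd t).differentiableAt
    exact this.continuous
  have hmono : MonotoneOn F (Set.Icc (0:ℝ) 1) := by
    apply monotoneOn_of_deriv_nonneg (convex_Icc 0 1) hFc.continuousOn
    · intro x _
      exact (hFd x).differentiableAt.differentiableWithinAt
    · intro x hx
      rw [interior_Icc] at hx
      exact hderiv_nonneg x hx
  have h01 := hmono (Set.mem_Icc.mpr ⟨le_refl 0, zero_le_one⟩)
    (Set.mem_Icc.mpr ⟨zero_le_one, le_refl 1⟩) zero_le_one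
  have hF0 : F 0 = 0 := by simp [hF]
  have hF1 : F 1 = f a + m + L / 2 * ‖u‖^2 - f b := by
    simp only [hF, one_pow, one_mul, one_smul]
    rw [show a + u = b by rw [hu]; abel]
    ring
  rw [hF0, hF1] at h01
  linarith



lemma inner_triple (x y z : E) :
    2 * ⟪x - y, y - z⟫ = ‖x - z‖^2 - ‖x - y‖^2 - ‖y - z‖^2 := by
  have h := norm_add_sq_real (x - y) (y - z)
  rw [show (x - y) + (y - z) = x - z by abel] at h
  linarith

lemma young_norm (x y : E) (c : ℝ) (hc : 0 < c) :
    ‖x + y‖^2 ≤ (1 + c) * ‖x‖^2 + (1 + 1/c) * ‖y‖^2 := by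
  have h := norm_add_sq_real x y
  have hin : ⟪x, y⟫ ≤ ‖x‖ * ‖y‖ := real_inner_le_norm x y
  have key : 2 * (‖x‖ * ‖y‖) - c * ‖x‖^2 ≤ ‖y‖^2 / c := by
    rw [le_div_iff₀ hc]
    nlinarith [sq_nonneg (c * ‖x‖ - ‖y‖), hc]
  have : (1 + 1/c) * ‖y‖^2 = ‖y‖^2 + ‖y‖^2 / c := by field_simp
  linarith

/-- One inexact gradient step on a strongly convex smooth function. -/
lemma stepA (f : E → ℝ) (μ Lg s : ℝ)
    (hμ : 0 < μ) (hμL : μ ≤ Lg) (hs0 : 0 < s) (hsL : s * Lg ≤ 1/6)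
    (hdiff : Differentiable ℝ f)
    (hsc : StrongConvexOn Set.univ μ f)
    (hsmooth : ∀ y1 y2, ‖gradient f y1 - gradient f y2‖ ≤ Lg * ‖y1 - y2‖)
    (yst ybar yhat v : E)
    (hmin : ∀ y, f yst ≤ f y)
    (hyhat : yhat = ybar - s • v) :
    ‖yhat - yst‖^2 ≤ (1 - s*μ/2) * ‖ybar - yst‖^2 - (3/4) * ‖yhat - ybar‖^2
      + (4*s/μ) * ‖gradient f ybar - v‖^2 := by
  set G := gradient f ybar with hG
  set w := G - v with hw
  set e0 := ‖ybar - yst‖ with he0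
  set d0 := ‖yhat - ybar‖ with hd0
  have h1 : f yhat ≤ f ybar + ⟪G, yhat - ybar⟫ + Lg/2 * ‖yhat - ybar‖^2 :=
    smooth_descent f Lg hdiff hsmooth ybar yhat
  have h2 : f ybar + ⟪G, yst - ybar⟫ + μ/2 * ‖yst - ybar‖^2 ≤ f yst :=
    strong_convex_grad_le f μ hdiff hsc ybar yst
  have h3 : f yst ≤ f yhat := hmin yhat
  have hrev : ‖yst - ybar‖ = e0 := by rw [he0, norm_sub_rev]
  -- split gradient inner products
  have hsplit : ⟪G, yhat - ybar⟫ - ⟪G, yst - ybar⟫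
      = ⟪w, yhat - yst⟫ + ⟪v, yhat - yst⟫ := by
    rw [← inner_sub_right, show (yhat - ybar) - (yst - ybar) = yhat - yst by abel,
      show G = w + v by rw [hw]; abel, inner_add_left]
  -- prox step characterization
  have hbyv : ybar - yhat = s • v := by rw [hyhat]; abel
  have hprox : ⟪v, yhat - yst⟫
      = 1/(2*s) * (e0^2 - d0^2 - ‖yhat - yst‖^2) := by
    have htri := inner_triple ybar yhat yst
    have hsv : ⟪ybar - yhat, yhat - yst⟫ = s * ⟪v, yhat - yst⟫ := by
      rw [hbyv, real_inner_smul_left]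
    have hd0' : ‖ybar - yhat‖ = d0 := by rw [hd0, norm_sub_rev]
    rw [hsv, hd0', ← he0] at htri
    field_simp
    linarith
  have master : 0 ≤ ⟪w, yhat - yst⟫ + 1/(2*s) * (e0^2 - d0^2 - ‖yhat - yst‖^2)
      + Lg/2 * d0^2 - μ/2 * e0^2 := by
    rw [hrev] at h2
    have := hsplit
    rw [hprox] at hsplit
    linarith [h1, h2, h3, hsplit]
  -- multiply master by 2s
  have master2 : 0 ≤ 2*s*⟪w, yhat - yst⟫ + (e0^2 - d0^2 - ‖yhat - yst‖^2)
      + s*Lg*d0^2 - s*μ*e0^2 := by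
    have hmul := mul_le_mul_of_nonneg_left master (by positivity : (0:ℝ) ≤ 2*s)
    have hexp : 2*s*(⟪w, yhat - yst⟫ + 1/(2*s) * (e0^2 - d0^2 - ‖yhat - yst‖^2)
        + Lg/2 * d0^2 - μ/2 * e0^2)
        = 2*s*⟪w, yhat - yst⟫ + (e0^2 - d0^2 - ‖yhat - yst‖^2)
          + s*Lg*d0^2 - s*μ*e0^2 := by
      field_simp
    rw [hexp] at hmul
    simpa using hmul
  -- Young bounds on the error inner products
  have hwsplit : ⟪w, yhat - yst⟫ = ⟪w, ybar - yst⟫ + ⟪w, yhat - ybar⟫ := by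
    rw [← inner_add_right, show (ybar - yst) + (yhat - ybar) = yhat - yst by abel]
  have hwe : ⟪w, ybar - yst⟫ ≤ ‖w‖ * e0 := by rw [he0]; exact real_inner_le_norm _ _
  have hwd : ⟪w, yhat - ybar⟫ ≤ ‖w‖ * d0 := by rw [hd0]; exact real_inner_le_norm _ _
  have y1 : 2*s*(‖w‖ * e0) - s*μ/2 * e0^2 ≤ 2*s*‖w‖^2/μ := by
    rw [le_div_iff₀ hμ]
    nlinarith [mul_nonneg hs0.le (sq_nonneg (μ * e0 - 2 * ‖w‖))]
  have y2 : 2*s*(‖w‖ * d0) ≤ 1/12 * d0^2 + 12*s^2*‖w‖^2 := by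
    nlinarith [sq_nonneg (d0 - 12 * s * ‖w‖)]
  have y3 : 12*s^2*‖w‖^2 ≤ 2*s*‖w‖^2/μ := by
    rw [le_div_iff₀ hμ]
    have hsμ : s * μ ≤ 1/6 := le_trans (by nlinarith [hs0.le]) hsL
    nlinarith [mul_nonneg hs0.le (sq_nonneg ‖w‖), hsμ]
  have hsLd : s*Lg*d0^2 ≤ 1/6 * d0^2 := by
    nlinarith [mul_nonneg (sub_nonneg.mpr hsL) (sq_nonneg d0)]
  have hwe2 := mul_le_mul_of_nonneg_left hwe (by positivity : (0:ℝ) ≤ 2*s)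
  have hwd2 := mul_le_mul_of_nonneg_left hwd (by positivity : (0:ℝ) ≤ 2*s)
  have hfin : ‖yhat - yst‖^2 ≤ (1 - s*μ/2) * e0^2 - (3/4) * d0^2 + (4*s/μ)*‖w‖^2 := by
    have h4 : (4*s/μ)*‖w‖^2 = 2*s*‖w‖^2/μ + 2*s*‖w‖^2/μ := by ring
    rw [h4]
    have hws2 : 2*s*⟪w, yhat - yst⟫ = 2*s*⟪w, ybar - yst⟫ + 2*s*⟪w, yhat - ybar⟫ := by
      rw [hwsplit]; ring
    linarith [master2, hws2, hwe2, hwd2, y1, y2, y3, hsLd]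
  exact hfin

lemma etasmu_scalar (η s μ : ℝ) (hη : 0 < η) (hη1 : η ≤ 1) (hs : 0 < s) (hμ : 0 < μ)
    (hsμ : s * μ ≤ 1/6) : η * s * μ ≤ 1/6 := by nlinarith

lemma coefE_scalar (t : ℝ) (ht : 0 ≤ t) : (1 + t/4) * (1 - t/2) ≤ 1 - t/4 := by
  nlinarith [sq_nonneg t]

lemma fX_scalar (μ s η : ℝ) (hμ : 0 < μ) (hs0 : 0 < s) (hη : 0 < η) (hη1 : η ≤ 1)
    (hsμ : s * μ ≤ 1/6) :
    (1 + 1/(η*s*μ/4)) * η^2 ≤ 25*η/(6*μ*s) := by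
  have hη6 : η * (s * μ) ≤ 1/6 := by
    have := mul_le_mul hη1 hsμ (by positivity) zero_le_one
    linarith
  have step : η^2 + 4*η/(s*μ) ≤ 25*η/(6*μ*s) := by
    have h₂ : 25*η/(6*μ*s) - 4*η/(s*μ) = η/(6*μ*s) := by
      field_simp
      ring
    have h₃ : η^2 ≤ η/(6*μ*s) := by
      rw [le_div_iff₀ (by positivity)]
      nlinarith [mul_le_mul_of_nonneg_left hη6 (by positivity : (0:ℝ) ≤ 6*η)]
    linarith
  calc (1 + 1/(η*s*μ/4)) * η^2 = η^2 + 4*η/(s*μ) := by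
        rw [one_div_div]
        field_simp
    _ ≤ 25*η/(6*μ*s) := step


/-- One-step contraction of the lower-level iterate toward the moving minimizer
`y*(x)`: with `g(x,·)` `μ`-strongly convex and `L_g`-smooth, `y*` `κ`-Lipschitz
(`κ = L_g/μ`), updates `ŷ = ȳ - (λ/b) v̄`, `ȳ⁺ = ȳ + η(ŷ - ȳ)`,
`x̄⁺ = x̄ + η(x̂ - x̄)`, and `ρ ≤ b`, `0 < η ≤ 1`, `0 < λ ≤ ρ/(6L_g)`:
`‖ȳ⁺ - y*(x̄⁺)‖² ≤ (1 - ημλ/(4b))‖ȳ - y*(x̄)‖² - (3η/4)‖ŷ - ȳ‖²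
  + (25ηλ/(6μb))‖∇_y g(x̄,ȳ) - v̄‖² + (25κ²ηb/(6μλ))‖x̂ - x̄‖²`. -/
theorem lower_level_contraction (d p : ℕ)
    (g : EuclideanSpace ℝ (Fin d) → EuclideanSpace ℝ (Fin p) → ℝ)
    (μ Lg κ ρ lam η b : ℝ)
    (hμ : 0 < μ) (hμL : μ ≤ Lg) (hκ : κ = Lg / μ)
    (hρ : 0 < ρ) (hb : ρ ≤ b) (hη : 0 < η) (hη1 : η ≤ 1)
    (hlam : 0 < lam) (hlam2 : lam ≤ ρ / (6 * Lg))
    (hdiff : ∀ x, Differentiable ℝ (fun y => g x y))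
    (hsc : ∀ x, StrongConvexOn Set.univ μ (fun y => g x y))
    (hsmooth : ∀ x y1 y2,
      ‖gradient (fun y => g x y) y1 - gradient (fun y => g x y) y2‖ ≤ Lg * ‖y1 - y2‖)
    (ystar : EuclideanSpace ℝ (Fin d) → EuclideanSpace ℝ (Fin p))
    (hmin : ∀ x y, g x (ystar x) ≤ g x y)
    (hylip : ∀ x1 x2, ‖ystar x1 - ystar x2‖ ≤ κ * ‖x1 - x2‖)
    (xbar xhat xnext : EuclideanSpace ℝ (Fin d))
    (ybar yhat ynext v : EuclideanSpace ℝ (Fin p))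
    (hyhat : yhat = ybar - (lam / b) • v)
    (hynext : ynext = ybar + η • (yhat - ybar))
    (hxnext : xnext = xbar + η • (xhat - xbar)) :
    ‖ynext - ystar xnext‖ ^ 2 ≤
      (1 - η * μ * lam / (4 * b)) * ‖ybar - ystar xbar‖ ^ 2 -
      (3 * η / 4) * ‖yhat - ybar‖ ^ 2 +
      (25 * η * lam / (6 * μ * b)) * ‖gradient (fun y => g xbar y) ybar - v‖ ^ 2 +
      (25 * κ ^ 2 * η * b / (6 * μ * lam)) * ‖xhat - xbar‖ ^ 2 := by
  have hb0 : (0:ℝ) < b := lt_of_lt_of_le hρ hb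
  have hLg0 : (0:ℝ) < Lg := lt_of_lt_of_le hμ hμL
  set s : ℝ := lam / b with hs_def
  have hs0 : 0 < s := div_pos hlam hb0
  have hsL : s * Lg ≤ 1/6 := by
    rw [hs_def, div_mul_eq_mul_div, div_le_iff₀ hb0]
    have h6 : lam * (6 * Lg) ≤ ρ := (le_div_iff₀ (by positivity)).mp hlam2
    nlinarith [h6, hb]
  have hsμ : s * μ ≤ 1/6 :=
    le_trans (mul_le_mul_of_nonneg_left hμL hs0.le) hsL
  have hκ0 : 0 < κ := by rw [hκ]; positivity
  set yst := ystar xbar with hyst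
  set w := gradient (fun y => g xbar y) ybar - v with hw
  set e0 := ‖ybar - yst‖ with he0
  set d0 := ‖yhat - ybar‖ with hd0
  set X0 := ‖xhat - xbar‖ with hX0
  -- Stage 1
  have hA : ‖yhat - yst‖^2 ≤ (1 - s*μ/2) * e0^2 - (3/4) * d0^2 + (4*s/μ) * ‖w‖^2 := by
    exact stepA (fun y => g xbar y) μ Lg s hμ hμL hs0 hsL (hdiff xbar) (hsc xbar)
      (hsmooth xbar) yst ybar yhat v (hmin xbar) hyhat
  -- Stage 2 : convex combination
  have hAexp : η * ‖yhat - yst‖^2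
      = η * e0^2 + 2*η*⟪ybar - yst, yhat - ybar⟫ + η * d0^2 := by
    rw [show yhat - yst = (ybar - yst) + (yhat - ybar) by abel, norm_add_sq_real]
    ring
  have hBexp : ‖ynext - yst‖^2 = e0^2 + 2*η*⟪ybar - yst, yhat - ybar⟫ + η^2 * d0^2 := by
    rw [show ynext - yst = (ybar - yst) + η • (yhat - ybar) by rw [hynext]; abel,
      norm_add_sq_real, real_inner_smul_right, norm_smul, Real.norm_eq_abs,
      abs_of_pos hη]
    ring
  have hB : ‖ynext - yst‖^2 ≤ (1 - η*s*μ/2) * e0^2 - (3*η/4) * d0^2 + (4*η*s/μ) * ‖w‖^2 := by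
    have hmulA := mul_le_mul_of_nonneg_left hA hη.le
    have hexp2 : η * ((1 - s*μ/2) * e0^2 - (3/4) * d0^2 + (4*s/μ) * ‖w‖^2)
        = (1 - s*μ/2) * (η * e0^2) - (3*η/4) * d0^2 + (4*η*s/μ) * ‖w‖^2 := by ring
    have hDnn : 0 ≤ (η - η^2) * d0^2 :=
      mul_nonneg (by nlinarith [hη.le, hη1]) (sq_nonneg d0)
    rw [hexp2] at hmulA
    linarith only [hmulA, hAexp, hBexp, hDnn]
  -- Stage 3 : moving minimizer, Young with c = η s μ / 4
  set c : ℝ := η * s * μ / 4 with hc_def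
  have hc0 : 0 < c := by rw [hc_def]; positivity
  have hyoung : ‖ynext - ystar xnext‖^2
      ≤ (1 + c) * ‖ynext - yst‖^2 + (1 + 1/c) * ‖yst - ystar xnext‖^2 := by
    have := young_norm (ynext - yst) (yst - ystar xnext) c hc0
    rw [show (ynext - yst) + (yst - ystar xnext) = ynext - ystar xnext by abel] at this
    exact this
  have hlipsq : ‖yst - ystar xnext‖^2 ≤ κ^2 * η^2 * X0^2 := by
    have h1 : ‖yst - ystar xnext‖ ≤ κ * (η * X0) := by
      have h2 := hylip xbar xnext
      have h3 : ‖xbar - xnext‖ = η * X0 := by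
        rw [hxnext, show xbar - (xbar + η • (xhat - xbar)) = -(η • (xhat - xbar)) by abel,
          norm_neg, norm_smul, Real.norm_eq_abs, abs_of_pos hη, hX0]
      rw [hyst]
      calc ‖ystar xbar - ystar xnext‖ ≤ κ * ‖xbar - xnext‖ := h2
        _ = κ * (η * X0) := by rw [h3]
    have h4 := pow_le_pow_left₀ (norm_nonneg _) h1 2
    calc ‖yst - ystar xnext‖^2 ≤ (κ * (η * X0))^2 := h4
      _ = κ^2 * η^2 * X0^2 := by ring
  -- Stage 4 : coefficient bounds
  have hη6 : η * s * μ ≤ 1/6 := etasmu_scalar η s μ hη hη1 hs0 hμ hsμ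
  have hη60 : 0 ≤ η * s * μ := by positivity
  have h1c : (1:ℝ) + c ≤ 25/24 := by rw [hc_def]; linarith
  have coefE : (1 + c) * (1 - η*s*μ/2) ≤ 1 - η*s*μ/4 := by
    rw [hc_def]
    exact coefE_scalar (η*s*μ) hη60
  have m1 := mul_le_mul_of_nonneg_right coefE (sq_nonneg e0)
  have m2 : (3*η/4) * d0^2 ≤ (1 + c) * ((3*η/4) * d0^2) :=
    le_mul_of_one_le_left (by positivity) (by linarith [hc0.le])
  have m3 : (1 + c) * ((4*η*s/μ) * ‖w‖^2) ≤ (25*η*s/(6*μ)) * ‖w‖^2 := by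
    have := mul_le_mul_of_nonneg_right h1c
      (by positivity : (0:ℝ) ≤ (4*η*s/μ) * ‖w‖^2)
    calc (1 + c) * ((4*η*s/μ) * ‖w‖^2) ≤ 25/24 * ((4*η*s/μ) * ‖w‖^2) := this
      _ = (25*η*s/(6*μ)) * ‖w‖^2 := by ring
  have fX : (1 + 1/c) * η^2 ≤ 25*η/(6*μ*s) := by
    rw [hc_def]
    exact fX_scalar μ s η hμ hs0 hη hη1 hsμ
  have m4 : (1 + 1/c) * (κ^2 * η^2 * X0^2) ≤ (25*κ^2*η/(6*μ*s)) * X0^2 := by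
    have := mul_le_mul_of_nonneg_right fX (by positivity : (0:ℝ) ≤ κ^2 * X0^2)
    calc (1 + 1/c) * (κ^2 * η^2 * X0^2) = ((1 + 1/c) * η^2) * (κ^2 * X0^2) := by ring
      _ ≤ (25*η/(6*μ*s)) * (κ^2 * X0^2) := this
      _ = (25*κ^2*η/(6*μ*s)) * X0^2 := by ring
  -- rewrite goal coefficients in terms of s
  have c1e : η * μ * lam / (4 * b) = η*s*μ/4 := by
    rw [hs_def]; field_simp
  have c2e : 25 * η * lam / (6 * μ * b) = 25*η*s/(6*μ) := by
    rw [hs_def]; field_simp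
  have c3e : 25 * κ ^ 2 * η * b / (6 * μ * lam) = 25*κ^2*η/(6*μ*s) := by
    rw [hs_def]
    field_simp
  rw [c1e, c2e, c3e]
  -- final assembly
  have hmulB := mul_le_mul_of_nonneg_left hB (by positivity : (0:ℝ) ≤ 1 + c)
  have hmulL := mul_le_mul_of_nonneg_left hlipsq (by positivity : (0:ℝ) ≤ 1 + 1/c)
  have hdist : (1 + c) * ((1 - η*s*μ/2) * e0^2 - (3*η/4) * d0^2 + (4*η*s/μ) * ‖w‖^2)
      = (1 + c) * (1 - η*s*μ/2) * e0^2 - (1 + c) * ((3*η/4) * d0^2)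
        + (1 + c) * ((4*η*s/μ) * ‖w‖^2) := by ring
  rw [hdist] at hmulB
  linarith only [hyoung, hmulB, hmulL, m1, m2, m3, m4]
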